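/- Let k < n be positive integers, K a field, and v ∈ I_{k,n}. The restricted ideal G_{k,n,0}|^v = ker(φ_0)|_{{I : v ≤ I}} is the zero ideal if and only if w_0 v ∈ Z_{k,n}, where Z_{k,n} = {{1,2,...,k-1} ∪ {i} : k ≤ i ≤ n} ∪ {{1,...,k+1} \ {i} : 1 ≤ i ≤ k-1} and w_0 v = {n+1-i : i ∈ v}. -/

import Mathlib

open MvPolynomial

/-- `IsIdx n k J` : `J` is a strictly increasing `k`-tuple with entries in `{1, …, n}`,
representing an element `{J 0 < J 1 < … < J (k-1)}` of `I_{k,n}`. -/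
def IsIdx (n k : ℕ) (J : Fin k → ℕ) : Prop :=
  StrictMono J ∧ ∀ s, 1 ≤ J s ∧ J s ≤ n

/-- Componentwise (Bruhat) order on sorted tuples. -/
def TupLe {k : ℕ} (I J : Fin k → ℕ) : Prop := ∀ s, I s ≤ J s

/-- Index type of the Plücker variables `P_I`, `I ∈ I_{k,n}`. -/
def PlVar (n k : ℕ) : Type := {J : Fin k → ℕ // IsIdx n k J}

/-- The number of entries of `J` lying in `{1, …, ℓ}`. -/
def nSmall {k : ℕ} (ℓ : ℕ) (J : Fin k → ℕ) : ℕ :=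
  (Finset.univ.filter fun s => J s ≤ ℓ).card

/-- Row assignment of the block diagonal matching field `B_ℓ` : the entry of `J` in sorted
position `i` (0-indexed) is placed in this (1-indexed) row. -/
def mfRow {k : ℕ} (ℓ : ℕ) (J : Fin k → ℕ) (i : Fin k) : ℕ :=
  if 2 ≤ k ∧ nSmall ℓ J = 1 then
    (if (i : ℕ) = 0 then 2 else if (i : ℕ) = 1 then 1 else (i : ℕ) + 1)
  else (i : ℕ) + 1

/-- The monomial map `φ_ℓ` of the block diagonal matching field `B_ℓ`. -/
noncomputable def phiMF (K : Type*) [Field K] (n k ℓ : ℕ) :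
    MvPolynomial (PlVar n k) K →ₐ[K] MvPolynomial (ℕ × ℕ) K :=
  aeval fun J => ∏ i : Fin k, X (mfRow ℓ J.val i, J.val i)

/-- The Plücker map, sending `P_J` to the `k × k` minor on columns `J`
of the generic matrix `(x_{i,j})`. -/
noncomputable def pluMap (K : Type*) [Field K] (n k : ℕ) :
    MvPolynomial (PlVar n k) K →ₐ[K] MvPolynomial (ℕ × ℕ) K :=
  aeval fun J =>
    (Matrix.of fun r c : Fin k => (X ((r : ℕ) + 1, J.val c) : MvPolynomial (ℕ × ℕ) K)).det

/-- Restriction `G|_T = (G + ⟨P_I : I ∉ T⟩) ∩ K[P_I : I ∈ T]` of an ideal to the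
variables indexed by `T`. -/
noncomputable def restrictIdeal {K : Type*} [Field K] {n k : ℕ}
    (G : Ideal (MvPolynomial (PlVar n k) K)) (T : Set (PlVar n k)) :
    Ideal (MvPolynomial T K) :=
  Ideal.comap (rename fun x : T => (x : PlVar n k))
    (G ⊔ Ideal.span (X '' {J | J ∉ T}))

/-- An ideal of a polynomial ring is monomial-free if it contains no monomial. -/
def MonomialFree {K : Type*} [Field K] {σ : Type*} (I : Ideal (MvPolynomial σ K)) : Prop :=
  ∀ m : σ →₀ ℕ, (monomial m (1 : K)) ∉ I

/-- `T_w^v = {I ∈ I_{k,n} : v ≤ I ≤ w}`. -/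
def TWV {n k : ℕ} (v w : PlVar n k) : Set (PlVar n k) :=
  {J | TupLe v.val J.val ∧ TupLe J.val w.val}

/-- `{I ∈ I_{k,n} : I ≤ w}`. -/
def TleW {n k : ℕ} (w : PlVar n k) : Set (PlVar n k) := {J | TupLe J.val w.val}

/-- `{I ∈ I_{k,n} : v ≤ I}`. -/
def TgeV {n k : ℕ} (v : PlVar n k) : Set (PlVar n k) := {J | TupLe v.val J.val}

/-- The weight matrix `M_ℓ` (rows and columns 1-indexed). -/
def Mmat (n ℓ : ℕ) (i j : ℕ) : ℤ :=
  if i = 2 then (if j ≤ ℓ then (ℓ : ℤ) - j + 1 else (n : ℤ) - j + ℓ + 1)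
  else ((i : ℤ) - 1) * ((n : ℤ) - j + 1)

/-- The weight `w_ℓ(P_J)` induced by `M_ℓ` on the Plücker variable `P_J`. -/
def wVec (n ℓ : ℕ) {k : ℕ} (J : Fin k → ℕ) : ℤ :=
  ∑ i : Fin k, Mmat n ℓ (mfRow ℓ J i) (J i)

/-- Weight of an exponent vector with respect to a weight vector `u`. -/
def expWt {σ : Type*} (u : σ → ℤ) (m : σ →₀ ℕ) : ℤ := m.sum fun i e => u i * (e : ℤ)

/-- Initial form of a polynomial: the sum of its terms of minimal `u`-weight. -/
noncomputable def initialForm {K σ : Type*} [Field K] (u : σ → ℤ) (f : MvPolynomial σ K) :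
    MvPolynomial σ K :=
  ∑ m ∈ f.support.filter (fun m => ∀ m' ∈ f.support, expWt u m ≤ expWt u m'),
    monomial m (coeff m f)

/-- Initial ideal with respect to the weight vector `u`. -/
noncomputable def initialIdeal {K σ : Type*} [Field K] (u : σ → ℤ)
    (I : Ideal (MvPolynomial σ K)) : Ideal (MvPolynomial σ K) :=
  Ideal.span {g | ∃ f ∈ I, g = initialForm u f}

/-- `w_0 I = {n + 1 - i : i ∈ I}`, as a sorted tuple. -/
def w0t (n : ℕ) {k : ℕ} (I : Fin k → ℕ) : Fin k → ℕ :=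
  fun s => n + 1 - I ⟨k - 1 - (s : ℕ), by have := s.isLt; omega⟩

/-- Membership in `Z_{k,n}` : either `J = {1, …, k-1, i}` with `k ≤ i ≤ n`,
or `J = {1, …, k+1} \\ {i}` with `1 ≤ i ≤ k-1`. -/
def ZPred (n k : ℕ) (J : Fin k → ℕ) : Prop :=
  (∃ i, k ≤ i ∧ i ≤ n ∧
    ∀ s : Fin k, J s = if (s : ℕ) + 1 < k then (s : ℕ) + 1 else i) ∨
  (∃ i, 1 ≤ i ∧ i ≤ k - 1 ∧
    ∀ s : Fin k, J s = if (s : ℕ) + 1 < i then (s : ℕ) + 1 else (s : ℕ) + 2)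

/-- A two-column semi-standard Young tableau with columns `I`, `J`. -/
def SSYT (n k : ℕ) (I J : Fin k → ℕ) : Prop :=
  IsIdx n k I ∧ IsIdx n k J ∧ ∀ s, I s ≤ J s

/-- The map `Γ_ℓ` on two-column semi-standard Young tableaux (columns as sorted tuples). -/
def Gamma (ℓ : ℕ) {k : ℕ} (I J : Fin k → ℕ) : (Fin k → ℕ) × (Fin k → ℕ) :=
  if h : 2 ≤ k then
    let i0 := I ⟨0, by omega⟩
    let i1 := I ⟨1, by omega⟩
    let j0 := J ⟨0, by omega⟩
    let j1 := J ⟨1, by omega⟩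
    if (i0 ≤ ℓ ∧ i1 ≤ ℓ ∧ j0 ≤ ℓ ∧ ℓ < j1 ∧ i0 < j0 ∧ j0 < i1) ∨
       (i0 ≤ ℓ ∧ ℓ < i1 ∧ ℓ < j0 ∧ ℓ < j1 ∧ j0 < i1 ∧ i1 < j1) then
      ((fun s => if (s : ℕ) = 0 then j0 else I s), (fun s => if (s : ℕ) = 0 then i0 else J s))
    else (I, J)
  else (I, J)

/-- A column (a `k`-subset given as a sorted tuple) displayed in `B_ℓ`-order:
when `k ≥ 2` and exactly one entry is `≤ ℓ`, the two smallest entries are swapped. -/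
def rowArrange (ℓ : ℕ) {k : ℕ} (C : Fin k → ℕ) : Fin k → ℕ :=
  if h : 2 ≤ k then
    (if nSmall ℓ C = 1 then
      fun s => if (s : ℕ) = 0 then C ⟨1, by omega⟩
        else if (s : ℕ) = 1 then C ⟨0, by omega⟩ else C s
    else C)
  else C

/-- Two two-column tableaux (with columns `A,B` resp. `C,D`) are row-wise equal. -/
def rowEq {k : ℕ} (A B C D : Fin k → ℕ) : Prop :=
  ∀ s, ({A s, B s} : Multiset ℕ) = {C s, D s}

/-- The kernel of the restricted monomial map `φ_ℓ|_T`. -/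
noncomputable def kerPhiRes (K : Type*) [Field K] (n k ℓ : ℕ) (T : Set (PlVar n k)) :
    Ideal (MvPolynomial T K) :=
  RingHom.ker ((phiMF K n k ℓ).comp (rename fun x : T => (x : PlVar n k)))

/-- The ideal `I(X_w^v)` of the Richardson variety: the restriction of the
Plücker ideal `G_{k,n}` to the variables in `T_w^v`. -/
noncomputable def richIdeal (K : Type*) [Field K] (n k : ℕ) (v w : PlVar n k) :
    Ideal (MvPolynomial (TWV v w) K) :=
  restrictIdeal (RingHom.ker (pluMap K n k)) (TWV v w)

/- ========================= auxiliary development ========================= -/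

namespace Statement10Aux

variable {n k : ℕ}

private lemma val0 (hk : 0 < k) : ((⟨0, hk⟩ : Fin k) : ℕ) = 0 := rfl

/-- growth lemma for strictly monotone tuples -/
lemma grow_aux {f : Fin k → ℕ} (hf : StrictMono f) :
    ∀ (d : ℕ) (a b : Fin k), (b : ℕ) = (a : ℕ) + d → f a + d ≤ f b := by
  intro d
  induction d with
  | zero =>
    intro a b h
    have : a = b := Fin.ext (by omega)
    subst this; omega
  | succ d ih =>
    intro a b h
    have hlt : (a : ℕ) + d < k := by have := b.isLt; omega
    have h1 := ih a ⟨(a : ℕ) + d, hlt⟩ rfl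
    have h2 : f ⟨(a : ℕ) + d, hlt⟩ < f b := hf (by rw [Fin.lt_def, Fin.val_mk]; omega)
    omega

lemma plvar_upper (x : PlVar n k) (s : Fin k) : x.val s ≤ n - k + 1 + (s : ℕ) := by
  have hk : 0 < k := s.pos
  have hs := s.isLt
  have hkl : k - 1 < k := by omega
  have h1 := grow_aux x.prop.1 (k - 1 - (s : ℕ)) s ⟨k - 1, hkl⟩ (by rw [Fin.val_mk]; omega)
  have h2 : x.val ⟨k - 1, hkl⟩ ≤ n := (x.prop.2 _).2
  have h3 := grow_aux x.prop.1 (k - 1) ⟨0, hk⟩ ⟨k - 1, hkl⟩ (by rw [Fin.val_mk, val0 hk]; omega)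
  have h4 : 1 ≤ x.val ⟨0, hk⟩ := (x.prop.2 _).1
  omega

lemma plvar_lower (x : PlVar n k) (s : Fin k) : 1 + (s : ℕ) ≤ x.val s := by
  have hk : 0 < k := s.pos
  have h1 := grow_aux x.prop.1 (s : ℕ) ⟨0, hk⟩ s (by rw [val0 hk]; omega)
  have h2 : 1 ≤ x.val ⟨0, hk⟩ := (x.prop.2 _).1
  omega

lemma nSmall_zero {J : Fin k → ℕ} (hJ : ∀ s, 1 ≤ J s) : nSmall 0 J = 0 := by
  unfold nSmall
  rw [Finset.card_eq_zero, Finset.filter_eq_empty_iff]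
  intro s _
  have := hJ s; omega

lemma mfRow_zero {J : Fin k → ℕ} (hJ : ∀ s, 1 ≤ J s) (i : Fin k) :
    mfRow 0 J i = (i : ℕ) + 1 := by
  unfold mfRow
  rw [if_neg]
  rintro ⟨-, h⟩
  rw [nSmall_zero hJ] at h
  omega

/-- the exponent vector of the diagonal monomial of a Plücker variable -/
noncomputable def Dex (x : PlVar n k) : (ℕ × ℕ) →₀ ℕ :=
  ∑ s : Fin k, Finsupp.single ((s : ℕ) + 1, x.val s) 1

lemma prod_monomial_one {K σ α : Type*} [Field K] (s : Finset α) (d : α → (σ →₀ ℕ)) :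
    (∏ i ∈ s, MvPolynomial.monomial (d i) (1 : K)) = MvPolynomial.monomial (∑ i ∈ s, d i) (1 : K) := by
  classical
  induction s using Finset.induction_on with
  | empty => simp
  | insert _ _ h ih =>
    rw [Finset.prod_insert h, Finset.sum_insert h, ih, MvPolynomial.monomial_mul, one_mul]

lemma phi_body (K : Type*) [Field K] (x : PlVar n k) :
    (∏ i : Fin k, (MvPolynomial.X (mfRow 0 x.val i, x.val i) : MvPolynomial (ℕ × ℕ) K))
      = MvPolynomial.monomial (Dex x) (1 : K) := by
  unfold Dex
  calc (∏ i : Fin k, (MvPolynomial.X (mfRow 0 x.val i, x.val i) : MvPolynomial (ℕ × ℕ) K))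
      = ∏ i : Fin k, MvPolynomial.monomial (Finsupp.single ((i : ℕ) + 1, x.val i) 1) (1 : K) := by
        refine Finset.prod_congr rfl fun i _ => ?_
        rw [mfRow_zero (fun s => (x.prop.2 s).1) i]
        rw [← pow_one (MvPolynomial.X ((i : ℕ) + 1, x.val i) : MvPolynomial (ℕ × ℕ) K),
          MvPolynomial.X_pow_eq_monomial]
    _ = MvPolynomial.monomial (∑ i : Fin k, Finsupp.single ((i : ℕ) + 1, x.val i) 1) (1 : K) :=
        prod_monomial_one _ _

lemma phiMF_zero_X (K : Type*) [Field K] (x : PlVar n k) :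
    phiMF K n k 0 (MvPolynomial.X x) = MvPolynomial.monomial (Dex x) (1 : K) := by
  unfold phiMF
  rw [MvPolynomial.aeval_X]
  exact phi_body K x

/-- exponent map induced on monomials -/
noncomputable def Eexp {τ σ : Type*} (g : τ → σ →₀ ℕ) (m : τ →₀ ℕ) : σ →₀ ℕ :=
  m.sum fun x e => e • g x

lemma aeval_monomial_map {K τ σ : Type*} [Field K] (g : τ → σ →₀ ℕ) (m : τ →₀ ℕ) (c : K) :
    MvPolynomial.aeval (fun x => MvPolynomial.monomial (g x) (1 : K)) (MvPolynomial.monomial m c)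
      = MvPolynomial.monomial (Eexp g m) c := by
  rw [MvPolynomial.aeval_monomial]
  have h1 : (m.prod fun x e => (MvPolynomial.monomial (g x) (1 : K)) ^ e)
      = MvPolynomial.monomial (Eexp g m) (1 : K) := by
    unfold Finsupp.prod
    rw [Finset.prod_congr rfl (fun x _ => by
      rw [MvPolynomial.monomial_pow, one_pow] :
        ∀ x ∈ m.support, (MvPolynomial.monomial (g x) (1 : K)) ^ (m x)
          = MvPolynomial.monomial ((m x) • g x) (1 : K)), prod_monomial_one]
    rfl
  rw [h1, MvPolynomial.algebraMap_eq, MvPolynomial.C_mul_monomial, mul_one]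

lemma monomial_map_eq_zero {K τ σ : Type*} [Field K] (g : τ → σ →₀ ℕ)
    (hg : ∀ m m' : τ →₀ ℕ, Eexp g m = Eexp g m' → m = m')
    (p : MvPolynomial τ K)
    (hp : MvPolynomial.aeval (fun x => MvPolynomial.monomial (g x) (1 : K)) p = 0) :
    p = 0 := by
  classical
  by_contra hne
  obtain ⟨m₀, hm₀⟩ := MvPolynomial.support_nonempty.2 hne
  have hps : MvPolynomial.aeval (fun x => MvPolynomial.monomial (g x) (1 : K)) p
      = ∑ m ∈ p.support, MvPolynomial.monomial (Eexp g m) (MvPolynomial.coeff m p) := by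
    conv_lhs => rw [p.as_sum]
    rw [map_sum]
    exact Finset.sum_congr rfl fun m _ => aeval_monomial_map g m _
  have hco : MvPolynomial.coeff (Eexp g m₀)
      (MvPolynomial.aeval (fun x => MvPolynomial.monomial (g x) (1 : K)) p)
      = MvPolynomial.coeff m₀ p := by
    rw [hps, MvPolynomial.coeff_sum]
    rw [Finset.sum_eq_single m₀]
    · rw [MvPolynomial.coeff_monomial, if_pos rfl]
    · intro m hm hmne
      rw [MvPolynomial.coeff_monomial, if_neg fun h => hmne (hg _ _ h)]
    · intro h; exact absurd hm₀ h
  rw [hp] at hco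
  simp only [MvPolynomial.coeff_zero] at hco
  exact (MvPolynomial.mem_support_iff.1 hm₀) hco.symm

lemma Dex_apply (y : PlVar n k) (s₀ : Fin k) (c : ℕ) :
    Dex y ((s₀ : ℕ) + 1, c) = if y.val s₀ = c then 1 else 0 := by
  classical
  unfold Dex
  rw [Finsupp.finset_sum_apply]
  rw [Finset.sum_eq_single s₀]
  · rw [Finsupp.single_apply]
    by_cases h : y.val s₀ = c
    · rw [if_pos (by rw [h]), if_pos h]
    · rw [if_neg (by simp [Prod.ext_iff, h]), if_neg h]
  · intro s _ hs
    rw [Finsupp.single_apply, if_neg]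
    intro hval
    have : (s : ℕ) + 1 = (s₀ : ℕ) + 1 := congrArg Prod.fst hval
    exact hs (Fin.ext (by omega))
  · intro h; exact absurd (Finset.mem_univ s₀) h

lemma sum_eq_of_le {f g : Fin k → ℕ} (hfg : ∀ s, f s ≤ g s)
    (hsum : ∑ s : Fin k, g s ≤ ∑ s : Fin k, f s) : ∀ s, f s = g s := by
  intro s
  by_contra hne
  have hlt : f s < g s := lt_of_le_of_ne (hfg s) hne
  have := Finset.sum_lt_sum (fun i (_ : i ∈ Finset.univ) => hfg i) ⟨s, Finset.mem_univ s, hlt⟩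
  omega

lemma Eexp_inj (hk : 0 < k) (v : PlVar n k)
    (hch : ∀ x y : PlVar n k, x ∈ TgeV v → y ∈ TgeV v →
      TupLe x.val y.val ∨ TupLe y.val x.val)
    (m m' : ↥(TgeV v) →₀ ℕ)
    (hE : Eexp (fun x : ↥(TgeV v) => Dex (x : PlVar n k)) m
        = Eexp (fun x : ↥(TgeV v) => Dex (x : PlVar n k)) m') : m = m' := by
  classical
  by_contra hne
  set U : Finset ↥(TgeV v) := m.support ∪ m'.support with hU
  set Ds : Finset ↥(TgeV v) := U.filter (fun x => m x ≠ m' x) with hDs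
  have hDne : Ds.Nonempty := by
    have hex : ∃ x, m x ≠ m' x := by
      by_contra h; push_neg at h; exact hne (Finsupp.ext h)
    obtain ⟨x, hx⟩ := hex
    refine ⟨x, Finset.mem_filter.2 ⟨?_, hx⟩⟩
    by_cases h0 : m x = 0
    · exact Finset.mem_union_right _ (Finsupp.mem_support_iff.2 fun h => hx (by rw [h0, h]))
    · exact Finset.mem_union_left _ (Finsupp.mem_support_iff.2 h0)
  obtain ⟨I, hIDs, hImin⟩ :=
    Finset.exists_min_image Ds (fun x => ∑ s : Fin k, (x : PlVar n k).val s) hDne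
  have hpt : ∀ x ∈ Ds, TupLe (I : PlVar n k).val (x : PlVar n k).val := by
    intro x hx
    rcases hch I x I.prop x.prop with h | h
    · exact h
    · intro s
      exact le_of_eq (sum_eq_of_le h (hImin x hx) s).symm
  obtain ⟨s₀, hs₀⟩ : ∃ s₀ : Fin k, ∀ x ∈ Ds, x ≠ I →
      (I : PlVar n k).val s₀ < (x : PlVar n k).val s₀ := by
    by_cases hDE : (Ds.erase I).Nonempty
    · obtain ⟨J, hJe, hJmin⟩ :=
        Finset.exists_min_image (Ds.erase I) (fun x => ∑ s : Fin k, (x : PlVar n k).val s) hDE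
      have hJDs : J ∈ Ds := Finset.mem_of_mem_erase hJe
      have hJne : J ≠ I := Finset.ne_of_mem_erase hJe
      have hIJ := hpt J hJDs
      have hex : ∃ s : Fin k, (I : PlVar n k).val s < (J : PlVar n k).val s := by
        by_contra h
        push_neg at h
        apply hJne
        have heq : ∀ s, (J : PlVar n k).val s = (I : PlVar n k).val s :=
          fun s => le_antisymm (h s) (hIJ s)
        exact Subtype.ext (Subtype.ext (funext heq))
      obtain ⟨s₀, hs₀⟩ := hex
      refine ⟨s₀, fun x hx hxne => ?_⟩
      have hxe : x ∈ Ds.erase I := Finset.mem_erase.2 ⟨hxne, hx⟩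
      have hJx : TupLe (J : PlVar n k).val (x : PlVar n k).val := by
        rcases hch J x J.prop x.prop with h | h
        · exact h
        · intro s; exact le_of_eq (sum_eq_of_le h (hJmin x hxe) s).symm
      exact lt_of_lt_of_le hs₀ (hJx s₀)
    · refine ⟨⟨0, hk⟩, fun x hx hxne => absurd (Finset.mem_erase.2 ⟨hxne, hx⟩) ?_⟩
      rw [Finset.not_nonempty_iff_eq_empty] at hDE
      rw [hDE]
      exact Finset.notMem_empty _
  have key : ∀ mm : ↥(TgeV v) →₀ ℕ, mm.support ⊆ U →
      (Eexp (fun x : ↥(TgeV v) => Dex ((x : PlVar n k))) mm)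
        ((s₀ : ℕ) + 1, (I : PlVar n k).val s₀)
      = ∑ x ∈ U, mm x *
          (if (x : PlVar n k).val s₀ = (I : PlVar n k).val s₀ then 1 else 0) := by
    intro mm hsub
    unfold Eexp
    rw [Finsupp.sum_apply]
    rw [Finsupp.sum_of_support_subset mm hsub _ (fun i _ => by simp)]
    exact Finset.sum_congr rfl fun x _ => by
      rw [Finsupp.smul_apply, Dex_apply, smul_eq_mul]
  have h1 := key m Finset.subset_union_left
  have h2 := key m' Finset.subset_union_right
  rw [hE] at h1
  have hsum : (∑ x ∈ U, m x *
        (if (x : PlVar n k).val s₀ = (I : PlVar n k).val s₀ then 1 else 0))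
      = ∑ x ∈ U, m' x *
        (if (x : PlVar n k).val s₀ = (I : PlVar n k).val s₀ then 1 else 0) := by
    rw [← h1, ← h2]
  have hIU : I ∈ U := (Finset.mem_filter.1 hIDs).1
  rw [← Finset.add_sum_erase U _ hIU, ← Finset.add_sum_erase U _ hIU] at hsum
  have htail : ∀ x ∈ U.erase I,
      m x * (if (x : PlVar n k).val s₀ = (I : PlVar n k).val s₀ then 1 else 0)
      = m' x * (if (x : PlVar n k).val s₀ = (I : PlVar n k).val s₀ then 1 else 0) := by
    intro x hxe
    by_cases hmx : m x = m' x
    · rw [hmx]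
    · have hxDs : x ∈ Ds := Finset.mem_filter.2 ⟨Finset.mem_of_mem_erase hxe, hmx⟩
      have hlt := hs₀ x hxDs (Finset.ne_of_mem_erase hxe)
      rw [if_neg (by omega), mul_zero, mul_zero]
  rw [Finset.sum_congr rfl htail] at hsum
  rw [if_pos rfl] at hsum
  have : m I = m' I := by omega
  exact (Finset.mem_filter.1 hIDs).2 this

lemma chain_of_cond (hk : 0 < k) (v : PlVar n k)
    (hc : (∀ s : Fin k, 1 ≤ (s : ℕ) → v.val s = n - k + 1 + (s : ℕ)) ∨
      n - k ≤ v.val ⟨0, hk⟩) :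
    ∀ x y : PlVar n k, x ∈ TgeV v → y ∈ TgeV v →
      TupLe x.val y.val ∨ TupLe y.val x.val := by
  intro x y hx hy
  have hxm : TupLe v.val x.val := hx
  have hym : TupLe v.val y.val := hy
  rcases hc with hL | hR
  · rcases le_total (x.val ⟨0, hk⟩) (y.val ⟨0, hk⟩) with h | h
    · left; intro s
      by_cases hs : 1 ≤ (s : ℕ)
      · calc x.val s ≤ n - k + 1 + (s : ℕ) := plvar_upper x s
          _ = v.val s := (hL s hs).symm
          _ ≤ y.val s := hym s
      · have hs0 : s = ⟨0, hk⟩ := Fin.ext (by rw [val0 hk]; omega)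
        rw [hs0]; exact h
    · right; intro s
      by_cases hs : 1 ≤ (s : ℕ)
      · calc y.val s ≤ n - k + 1 + (s : ℕ) := plvar_upper y s
          _ = v.val s := (hL s hs).symm
          _ ≤ x.val s := hxm s
      · have hs0 : s = ⟨0, hk⟩ := Fin.ext (by rw [val0 hk]; omega)
        rw [hs0]; exact h
  · by_cases hxy : TupLe x.val y.val
    · left; exact hxy
    · right
      unfold TupLe at hxy
      push_neg at hxy
      obtain ⟨s, hs⟩ := hxy
      intro t
      have hx0 : n - k ≤ x.val ⟨0, hk⟩ := le_trans hR (hxm ⟨0, hk⟩)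
      have hy0 : n - k ≤ y.val ⟨0, hk⟩ := le_trans hR (hym ⟨0, hk⟩)
      rcases le_total (t : ℕ) (s : ℕ) with hts | hst
      · have g1 := grow_aux y.prop.1 ((s : ℕ) - (t : ℕ)) t s (by omega)
        have g2 := plvar_upper x s
        have g3 := grow_aux x.prop.1 (t : ℕ) ⟨0, hk⟩ t (by rw [val0 hk]; omega)
        omega
      · have g1 := grow_aux x.prop.1 ((t : ℕ) - (s : ℕ)) s t (by omega)
        have g2 := plvar_upper y t
        have g3 := grow_aux y.prop.1 (s : ℕ) ⟨0, hk⟩ s (by rw [val0 hk]; omega)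
        omega

/-- helper tuples for the incomparable pair -/
private def jT (n k v0 : ℕ) : Fin k → ℕ :=
  fun s => if (s : ℕ) = 0 then v0 else n - k + 1 + (s : ℕ)

private def iT {k : ℕ} (v : Fin k → ℕ) (v0 : ℕ) : Fin k → ℕ :=
  fun s => max (v s) (v0 + 1 + (s : ℕ))

private def minT {k : ℕ} (f g : Fin k → ℕ) : Fin k → ℕ := fun s => min (f s) (g s)

private def maxT {k : ℕ} (f g : Fin k → ℕ) : Fin k → ℕ := fun s => max (f s) (g s)

private lemma isIdx_minT {f g : Fin k → ℕ} (hf : IsIdx n k f) (hg : IsIdx n k g) :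
    IsIdx n k (minT f g) := by
  constructor
  · intro a b hab
    exact min_lt_min (hf.1 hab) (hg.1 hab)
  · intro s
    exact ⟨le_min (hf.2 s).1 (hg.2 s).1, le_trans (min_le_left _ _) (hf.2 s).2⟩

private lemma isIdx_maxT {f g : Fin k → ℕ} (hf : IsIdx n k f) (hg : IsIdx n k g) :
    IsIdx n k (maxT f g) := by
  constructor
  · intro a b hab
    exact max_lt_max (hf.1 hab) (hg.1 hab)
  · intro s
    exact ⟨le_trans (hf.2 s).1 (le_max_left _ _), max_le (hf.2 s).2 (hg.2 s).2⟩

private lemma dex_min_max {f g : Fin k → ℕ} (hf : IsIdx n k f) (hg : IsIdx n k g)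
    (hm : IsIdx n k (minT f g)) (hx : IsIdx n k (maxT f g)) :
    Dex (⟨f, hf⟩ : PlVar n k) + Dex ⟨g, hg⟩ = Dex ⟨minT f g, hm⟩ + Dex ⟨maxT f g, hx⟩ := by
  unfold Dex
  rw [← Finset.sum_add_distrib, ← Finset.sum_add_distrib]
  refine Finset.sum_congr rfl fun s _ => ?_
  show Finsupp.single ((s : ℕ) + 1, f s) 1 + Finsupp.single ((s : ℕ) + 1, g s) 1
      = Finsupp.single ((s : ℕ) + 1, minT f g s) 1 + Finsupp.single ((s : ℕ) + 1, maxT f g s) 1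
  unfold minT maxT
  rcases le_total (f s) (g s) with h | h
  · rw [min_eq_left h, max_eq_right h]
  · rw [min_eq_right h, max_eq_left h, add_comm]

private lemma not_bot_of_binomial (K : Type*) [Field K] (v : PlVar n k)
    (A B C D : ↥(TgeV v))
    (hDex : Dex (A : PlVar n k) + Dex (B : PlVar n k)
      = Dex (C : PlVar n k) + Dex (D : PlVar n k))
    (hBA : B ≠ A) (hCA : C ≠ A) (hDA : D ≠ A) :
    restrictIdeal (RingHom.ker (phiMF K n k 0)) (TgeV v) ≠ ⊥ := by
  classical
  set b : MvPolynomial ↥(TgeV v) K :=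
    MvPolynomial.X A * MvPolynomial.X B - MvPolynomial.X C * MvPolynomial.X D with hb
  have hmemIdeal : b ∈ restrictIdeal (RingHom.ker (phiMF K n k 0)) (TgeV v) := by
    unfold restrictIdeal
    rw [Ideal.mem_comap]
    apply Ideal.mem_sup_left
    rw [RingHom.mem_ker, hb, map_sub, map_mul, map_mul,
      MvPolynomial.rename_X, MvPolynomial.rename_X, MvPolynomial.rename_X,
      MvPolynomial.rename_X,
      map_sub, map_mul, map_mul, phiMF_zero_X, phiMF_zero_X, phiMF_zero_X, phiMF_zero_X,
      MvPolynomial.monomial_mul, MvPolynomial.monomial_mul, hDex]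
    exact sub_self _
  have hbne : b ≠ 0 := by
    intro h0
    have hXmul : ∀ (a c : ↥(TgeV v)),
        (MvPolynomial.X a * MvPolynomial.X c : MvPolynomial ↥(TgeV v) K)
        = MvPolynomial.monomial (Finsupp.single a 1 + Finsupp.single c 1) 1 := by
      intro a c
      rw [← pow_one (MvPolynomial.X a : MvPolynomial ↥(TgeV v) K),
        ← pow_one (MvPolynomial.X c : MvPolynomial ↥(TgeV v) K),
        MvPolynomial.X_pow_eq_monomial, MvPolynomial.X_pow_eq_monomial,
        MvPolynomial.monomial_mul, one_mul]
    have hco : MvPolynomial.coeff (Finsupp.single A 1 + Finsupp.single B 1) b = 1 := by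
      rw [hb, MvPolynomial.coeff_sub, hXmul, hXmul,
        MvPolynomial.coeff_monomial, MvPolynomial.coeff_monomial]
      rw [if_pos rfl, if_neg]
      · norm_num
      · intro heq
        have happ := DFunLike.congr_fun heq A
        rw [Finsupp.add_apply, Finsupp.add_apply, Finsupp.single_apply, Finsupp.single_apply,
          Finsupp.single_apply, Finsupp.single_apply] at happ
        rw [if_pos rfl, if_neg hCA, if_neg hDA, if_neg hBA] at happ
        omega
    rw [h0] at hco
    simp at hco
  intro hbot
  rw [hbot] at hmemIdeal
  exact hbne ((Submodule.mem_bot _).1 hmemIdeal)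

lemma not_bot_of_not_cond (K : Type*) [Field K] (hk : 0 < k) (hkn : k < n) (v : PlVar n k)
    (hnc : ¬ ((∀ s : Fin k, 1 ≤ (s : ℕ) → v.val s = n - k + 1 + (s : ℕ)) ∨
      n - k ≤ v.val ⟨0, hk⟩)) :
    restrictIdeal (RingHom.ker (phiMF K n k 0)) (TgeV v) ≠ ⊥ := by
  push_neg at hnc
  obtain ⟨⟨sw, hsw1, hsw2⟩, hnr⟩ := hnc
  have h00 : ((⟨0, hk⟩ : Fin k) : ℕ) = 0 := rfl
  have hv0 : v.val ⟨0, hk⟩ < n - k := hnr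
  have hv0low : 1 ≤ v.val ⟨0, hk⟩ := (v.prop.2 _).1
  have hswu : v.val sw ≤ n - k + (sw : ℕ) := by
    have := plvar_upper v sw; omega
  have hswlt := sw.isLt
  have hvg : ∀ s : Fin k, v.val ⟨0, hk⟩ + (s : ℕ) ≤ v.val s :=
    fun s => grow_aux v.prop.1 (s : ℕ) ⟨0, hk⟩ s (by rw [val0 hk]; omega)
  set v0 : ℕ := v.val ⟨0, hk⟩ with hv0def
  have hJidx : IsIdx n k (jT n k v0) := by
    constructor
    · intro a b hab
      have hab' : (a : ℕ) < (b : ℕ) := hab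
      unfold jT
      split_ifs with h1 h2 h2 <;> omega
    · intro s
      have hs := s.isLt
      unfold jT
      split_ifs with h1 <;> omega
  have hIidx : IsIdx n k (iT v.val v0) := by
    constructor
    · intro a b hab
      have hab' : (a : ℕ) < (b : ℕ) := hab
      exact max_lt_max (v.prop.1 hab) (by omega)
    · intro s
      have hs := s.isLt
      refine ⟨le_trans (v.prop.2 s).1 (le_max_left _ _), max_le (v.prop.2 s).2 (by omega)⟩
  have hJmem : TupLe v.val (jT n k v0) := by
    intro s
    unfold jT
    split_ifs with h1
    · exact le_of_eq (congrArg v.val (Fin.ext (by rw [h1, h00])))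
    · exact plvar_upper v s
  have hImem : TupLe v.val (iT v.val v0) := fun s => le_max_left _ _
  have hMidx := isIdx_minT (n := n) hIidx hJidx
  have hNidx := isIdx_maxT (n := n) hIidx hJidx
  have hMmem : TupLe v.val (minT (iT v.val v0) (jT n k v0)) :=
    fun s => le_min (hImem s) (hJmem s)
  have hNmem : TupLe v.val (maxT (iT v.val v0) (jT n k v0)) :=
    fun s => le_trans (hImem s) (le_max_left _ _)
  have hI0 : iT v.val v0 ⟨0, hk⟩ = v0 + 1 := by
    unfold iT
    rw [h00, Nat.add_zero]
    exact max_eq_right (by omega)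
  have hJ0 : jT n k v0 ⟨0, hk⟩ = v0 := by
    unfold jT
    rw [h00]
    exact if_pos rfl
  have hJsw : jT n k v0 sw = n - k + 1 + (sw : ℕ) := by
    unfold jT
    rw [if_neg (by omega)]
  have hIsw : iT v.val v0 sw ≤ n - k + (sw : ℕ) := by
    unfold iT
    exact max_le hswu (by omega)
  have hM0 : minT (iT v.val v0) (jT n k v0) ⟨0, hk⟩ = v0 := by
    unfold minT
    rw [hI0, hJ0]
    exact min_eq_right (by omega)
  have hNsw : maxT (iT v.val v0) (jT n k v0) sw = n - k + 1 + (sw : ℕ) := by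
    unfold maxT
    rw [hJsw]
    exact max_eq_right (by omega)
  refine not_bot_of_binomial K v
    ⟨⟨iT v.val v0, hIidx⟩, hImem⟩ ⟨⟨jT n k v0, hJidx⟩, hJmem⟩
    ⟨⟨minT (iT v.val v0) (jT n k v0), hMidx⟩, hMmem⟩
    ⟨⟨maxT (iT v.val v0) (jT n k v0), hNidx⟩, hNmem⟩
    (dex_min_max hIidx hJidx hMidx hNidx) ?_ ?_ ?_
  · intro h
    have h3 : jT n k v0 = iT v.val v0 :=
      congrArg (fun z : ↥(TgeV v) => (z : PlVar n k).val) h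
    have h4 := congrFun h3 ⟨0, hk⟩
    rw [hJ0, hI0] at h4
    omega
  · intro h
    have h3 : minT (iT v.val v0) (jT n k v0) = iT v.val v0 :=
      congrArg (fun z : ↥(TgeV v) => (z : PlVar n k).val) h
    have h4 := congrFun h3 ⟨0, hk⟩
    rw [hM0, hI0] at h4
    omega
  · intro h
    have h3 : maxT (iT v.val v0) (jT n k v0) = iT v.val v0 :=
      congrArg (fun z : ↥(TgeV v) => (z : PlVar n k).val) h
    have h4 := congrFun h3 sw
    rw [hNsw] at h4
    omega

lemma bot_of_cond (K : Type*) [Field K] (hk : 0 < k) (hkn : k < n) (v : PlVar n k)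
    (hc : (∀ s : Fin k, 1 ≤ (s : ℕ) → v.val s = n - k + 1 + (s : ℕ)) ∨
      n - k ≤ v.val ⟨0, hk⟩) :
    restrictIdeal (RingHom.ker (phiMF K n k 0)) (TgeV v) = ⊥ := by
  rw [eq_bot_iff]
  intro f hf
  rw [Submodule.mem_bot]
  unfold restrictIdeal at hf
  rw [Ideal.mem_comap] at hf
  obtain ⟨g, hg, h, hh, heq⟩ := Submodule.mem_sup.1 hf
  -- the "column killing" endomorphism χ
  set χ : MvPolynomial (ℕ × ℕ) K →ₐ[K] MvPolynomial (ℕ × ℕ) K :=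
    MvPolynomial.aeval (fun p : ℕ × ℕ => if hp : 0 < p.1 ∧ p.1 ≤ k then
      (if v.val ⟨p.1 - 1, by omega⟩ ≤ p.2 then MvPolynomial.X p else 0)
      else MvPolynomial.X p) with hχdef
  have hphiX : ∀ x : PlVar n k, phiMF K n k 0 (MvPolynomial.X x)
      = ∏ i : Fin k, MvPolynomial.X ((i : ℕ) + 1, x.val i) := by
    intro x
    unfold phiMF
    rw [MvPolynomial.aeval_X]
    exact Finset.prod_congr rfl fun i _ => by
      rw [mfRow_zero (fun s => (x.prop.2 s).1)]
  have hχX : ∀ (i : Fin k) (c : ℕ), χ (MvPolynomial.X ((i : ℕ) + 1, c))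
      = (if v.val i ≤ c then MvPolynomial.X ((i : ℕ) + 1, c) else 0) := by
    intro i c
    rw [hχdef, MvPolynomial.aeval_X]
    have hcond : 0 < (i : ℕ) + 1 ∧ (i : ℕ) + 1 ≤ k := ⟨Nat.succ_pos _, i.isLt⟩
    rw [dif_pos hcond]
    have hidx : (⟨(i : ℕ) + 1 - 1, by omega⟩ : Fin k) = i := Fin.ext rfl
    rw [hidx]
  have hχ_keep : ∀ x : PlVar n k, x ∈ TgeV v →
      χ (phiMF K n k 0 (MvPolynomial.X x)) = phiMF K n k 0 (MvPolynomial.X x) := by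
    intro x hx
    have hx' : TupLe v.val x.val := hx
    rw [hphiX, map_prod]
    refine Finset.prod_congr rfl fun i _ => ?_
    rw [hχX, if_pos (hx' i)]
  have hχ_kill : ∀ x : PlVar n k, x ∉ TgeV v →
      χ (phiMF K n k 0 (MvPolynomial.X x)) = 0 := by
    intro x hx
    have hx' : ¬ TupLe v.val x.val := hx
    unfold TupLe at hx'
    push_neg at hx'
    obtain ⟨s, hslt⟩ := hx'
    rw [hphiX, map_prod]
    refine Finset.prod_eq_zero (Finset.mem_univ s) ?_
    rw [hχX, if_neg (by omega)]
  have hcomm : χ (phiMF K n k 0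
        ((MvPolynomial.rename fun x : ↥(TgeV v) => (x : PlVar n k)) f))
      = phiMF K n k 0 ((MvPolynomial.rename fun x : ↥(TgeV v) => (x : PlVar n k)) f) := by
    have hhom : (χ.comp ((phiMF K n k 0).comp
        (MvPolynomial.rename fun x : ↥(TgeV v) => (x : PlVar n k))))
        = ((phiMF K n k 0).comp
          (MvPolynomial.rename fun x : ↥(TgeV v) => (x : PlVar n k))) := by
      apply MvPolynomial.algHom_ext
      intro x
      simp only [AlgHom.comp_apply, MvPolynomial.rename_X]
      exact hχ_keep _ x.prop
    exact DFunLike.congr_fun hhom f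
  have hχh : χ (phiMF K n k 0 h) = 0 := by
    have hmap : χ (phiMF K n k 0 h) ∈
        Ideal.map ((χ.comp (phiMF K n k 0)).toRingHom)
          (Ideal.span (MvPolynomial.X '' {J : PlVar n k | J ∉ TgeV v})) :=
      Ideal.mem_map_of_mem _ hh
    rw [Ideal.map_span] at hmap
    have hle : Ideal.span ((χ.comp (phiMF K n k 0)).toRingHom ''
        (MvPolynomial.X '' {J : PlVar n k | J ∉ TgeV v})) ≤ ⊥ := by
      rw [Ideal.span_le]
      rintro y ⟨z, ⟨J, hJ, rfl⟩, rfl⟩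
      have : χ (phiMF K n k 0 (MvPolynomial.X J)) = 0 := hχ_kill J hJ
      simpa using this
    have := hle hmap
    simpa using this
  have hψ : phiMF K n k 0 ((MvPolynomial.rename fun x : ↥(TgeV v) => (x : PlVar n k)) f)
      = 0 := by
    calc phiMF K n k 0 ((MvPolynomial.rename fun x : ↥(TgeV v) => (x : PlVar n k)) f)
        = χ (phiMF K n k 0 ((MvPolynomial.rename fun x : ↥(TgeV v) => (x : PlVar n k)) f)) :=
          hcomm.symm
      _ = χ (phiMF K n k 0 (g + h)) := by rw [heq]
      _ = χ (phiMF K n k 0 g) + χ (phiMF K n k 0 h) := by rw [map_add, map_add]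
      _ = 0 := by
          rw [RingHom.mem_ker.1 hg, hχh, map_zero, add_zero]
  have hren : phiMF K n k 0 ((MvPolynomial.rename fun x : ↥(TgeV v) => (x : PlVar n k)) f)
      = MvPolynomial.aeval
          (fun x : ↥(TgeV v) => MvPolynomial.monomial (Dex (x : PlVar n k)) (1 : K)) f := by
    unfold phiMF
    rw [MvPolynomial.aeval_rename]
    rw [show ((fun J : PlVar n k =>
        ∏ i : Fin k, (MvPolynomial.X (mfRow 0 J.val i, J.val i) : MvPolynomial (ℕ × ℕ) K)) ∘
        (fun x : ↥(TgeV v) => (x : PlVar n k)))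
      = (fun x : ↥(TgeV v) => MvPolynomial.monomial (Dex (x : PlVar n k)) (1 : K)) from
      funext fun x => phi_body K (x : PlVar n k)]
  have hfe : MvPolynomial.aeval
      (fun x : ↥(TgeV v) => MvPolynomial.monomial (Dex (x : PlVar n k)) (1 : K)) f = 0 := by
    rw [← hren]; exact hψ
  exact monomial_map_eq_zero _
    (fun m m' => Eexp_inj hk v (chain_of_cond hk v hc) m m') f hfe

lemma w0t_apply {k : ℕ} (n : ℕ) (I : Fin k → ℕ) (s j : Fin k) (hj : (j : ℕ) = k - 1 - (s : ℕ)) :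
    w0t n I s = n + 1 - I j := by
  unfold w0t
  exact congrArg (fun t => n + 1 - t)
    (congrArg I (Fin.ext (a := ⟨k - 1 - (s : ℕ), by have := s.isLt; omega⟩) (b := j) hj.symm))

lemma cond_iff_zpred (hk : 0 < k) (hkn : k < n) (v : PlVar n k) :
    ((∀ s : Fin k, 1 ≤ (s : ℕ) → v.val s = n - k + 1 + (s : ℕ)) ∨ n - k ≤ v.val ⟨0, hk⟩)
      ↔ ZPred n k (w0t n v.val) := by
  have h07 : ((⟨0, hk⟩ : Fin k) : ℕ) = 0 := rfl
  have hup := fun s => plvar_upper v s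
  have hlow := fun s => plvar_lower v s
  have hlen : ∀ s, v.val s ≤ n := fun s => (v.prop.2 s).2
  constructor
  · intro hc
    by_cases hall : ∀ s : Fin k, 1 ≤ (s : ℕ) → v.val s = n - k + 1 + (s : ℕ)
    · left
      have hu0 := hup ⟨0, hk⟩
      have hl0 := hlow ⟨0, hk⟩
      refine ⟨n + 1 - v.val ⟨0, hk⟩, by omega, by omega, ?_⟩
      intro s
      have hs := s.isLt
      by_cases hcase : (s : ℕ) + 1 < k
      · rw [if_pos hcase]
        set j : Fin k := ⟨k - 1 - (s : ℕ), by omega⟩ with hjdef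
        have hjval : (j : ℕ) = k - 1 - (s : ℕ) := rfl
        have hw := w0t_apply n v.val s j hjval
        have hv1 := hall j (by rw [hjval]; omega)
        have hl := hlen j
        rw [hw]
        omega
      · rw [if_neg hcase]
        exact w0t_apply n v.val s ⟨0, hk⟩ (by rw [h07]; omega)
    · have hR : n - k ≤ v.val ⟨0, hk⟩ := hc.resolve_left hall
      have hu0 := hup ⟨0, hk⟩
      have htwo : ∀ j : Fin k, v.val j = n - k + (j : ℕ) ∨ v.val j = n - k + 1 + (j : ℕ) := by
        intro j
        have g := grow_aux v.prop.1 (j : ℕ) ⟨0, hk⟩ j (by rw [h07]; omega)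
        have := hup j
        omega
      push_neg at hall
      obtain ⟨j₀, hj₀1, hj₀ne⟩ := hall
      have hj₀low : v.val j₀ = n - k + (j₀ : ℕ) := by
        rcases htwo j₀ with hh | hh
        · exact hh
        · omega
      set S : Finset (Fin k) :=
        Finset.univ.filter (fun j : Fin k => v.val j = n - k + (j : ℕ)) with hSdef
      have hj₀S : j₀ ∈ S := Finset.mem_filter.2 ⟨Finset.mem_univ _, hj₀low⟩
      have hSne : S.Nonempty := ⟨j₀, hj₀S⟩
      set p : Fin k := S.max' hSne with hpdef
      have hpS : p ∈ S := S.max'_mem hSne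
      have hplow : v.val p = n - k + (p : ℕ) := (Finset.mem_filter.1 hpS).2
      have hp1 : 1 ≤ (p : ℕ) := by
        have := Fin.le_def.1 (S.le_max' j₀ hj₀S)
        omega
      have hps := p.isLt
      have hlowseg : ∀ j : Fin k, (j : ℕ) ≤ (p : ℕ) → v.val j = n - k + (j : ℕ) := by
        intro j hj
        have g := grow_aux v.prop.1 ((p : ℕ) - (j : ℕ)) j p (by omega)
        rcases htwo j with hh | hh
        · exact hh
        · omega
      have hhighseg : ∀ j : Fin k, (p : ℕ) < (j : ℕ) → v.val j = n - k + 1 + (j : ℕ) := by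
        intro j hj
        rcases htwo j with hh | hh
        · exfalso
          have := Fin.le_def.1 (S.le_max' j (Finset.mem_filter.2 ⟨Finset.mem_univ _, hh⟩))
          omega
        · exact hh
      right
      refine ⟨k - (p : ℕ), by omega, by omega, ?_⟩
      intro s
      have hs := s.isLt
      set j : Fin k := ⟨k - 1 - (s : ℕ), by omega⟩ with hjdef
      have hjval : (j : ℕ) = k - 1 - (s : ℕ) := rfl
      have hw := w0t_apply n v.val s j hjval
      by_cases hcase : (s : ℕ) + 1 < k - (p : ℕ)
      · rw [if_pos hcase, hw, hhighseg j (by omega)]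
        omega
      · rw [if_neg hcase, hw, hlowseg j (by omega)]
        omega
  · rintro (⟨i, hi1, hi2, h⟩ | ⟨i, hi1, hi2, h⟩)
    · left
      intro s hs1
      have hs := s.isLt
      set t : Fin k := ⟨k - 1 - (s : ℕ), by omega⟩ with htdef
      have htval : (t : ℕ) = k - 1 - (s : ℕ) := rfl
      have h1 := h t
      have hw := w0t_apply n v.val t s (by omega)
      rw [hw, if_pos (by omega)] at h1
      have hl := hlen s
      omega
    · right
      have hk2 : 2 ≤ k := by omega
      set t : Fin k := ⟨k - 1, by omega⟩ with htdef
      have htval : (t : ℕ) = k - 1 := rfl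
      have h1 := h t
      have hw := w0t_apply n v.val t ⟨0, hk⟩ (by rw [h07]; omega)
      rw [hw, if_neg (by omega)] at h1
      have hl := hlen ⟨0, hk⟩
      have hl0 := hlow ⟨0, hk⟩
      omega

end Statement10Aux


/-- The restricted ideal `G_{k,n,0}|^v = ker(φ_0)|_{{I : v ≤ I}}` is the
zero ideal if and only if `w_0 v ∈ Z_{k,n}`. -/
theorem statement_10 (K : Type*) [Field K] (n k : ℕ) (hk : 0 < k) (hkn : k < n)
    (v : PlVar n k) :
    restrictIdeal (RingHom.ker (phiMF K n k 0)) (TgeV v) = ⊥ ↔ ZPred n k (w0t n v.val) := by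
  have hiff := Statement10Aux.cond_iff_zpred hk hkn v
  constructor
  · intro hbot
    by_contra hz
    exact Statement10Aux.not_bot_of_not_cond K hk hkn v (fun hc => hz (hiff.1 hc)) hbot
  · intro hz
    exact Statement10Aux.bot_of_cond K hk hkn v (hiff.2 hz)
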